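/- If a countable collection C = {L_1, L_2, ...} of infinite languages over U satisfies Weak Angluin's Condition with Existence, then there exists an algorithm that exhaustively generates in the limit from C. -/
import Mathlib


/-! STATEMENT 11: If a countable collection C = {L_1, L_2, ...} of infinite languages over U satisfies Weak Angluin's Condition with Existence, then some algorithm exhaustively generates in the limit from C. -/

/-- `x` is an enumeration of the language `K`. -/
def IsEnumerationOf {U : Type} (K : Set U) (x : ℕ → U) : Prop :=
  (∀ t, x t ∈ K) ∧ ∀ w ∈ K, ∃ t, x t = w

/-- The set `S_t` of distinct strings among the first `t` inputs. -/
def seen {U : Type} (x : ℕ → U) (t : ℕ) : Set U := x '' {i | i < t}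

/-- The input prefix `(x_1, ..., x_t)` as a list. -/
def inputList {U : Type} (x : ℕ → U) (t : ℕ) : List U :=
  List.ofFn (fun i : Fin t => x i)

/-- `Z_{<t}`: the distinct strings among `G_1(1), ..., G_{t-1}(1)`. -/
def ZltSet {U : Type} (A : List U → ℕ → U) (x : ℕ → U) (t : ℕ) : Set U :=
  (fun s => A (inputList x s) 0) '' {s | 1 ≤ s ∧ s < t}

/-- `Z_{≥t}`: the distinct strings in `G_t(1), G_t(2), ...`. -/
def ZgeSet {U : Type} (A : List U → ℕ → U) (x : ℕ → U) (t : ℕ) : Set U :=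
  Set.range (A (inputList x t))

/-- The algorithm `A` exhaustively generates in the limit from the collection `C`. -/
def ExhaustivelyGenerates {U : Type} (A : List U → ℕ → U) (C : Set (Set U)) : Prop :=
  ∀ K ∈ C, ∀ x : ℕ → U, IsEnumerationOf K x →
    ∃ tstar : ℕ, ∀ t : ℕ, tstar ≤ t →
      (ZgeSet A x t \ K).Finite ∧ K ⊆ seen x t ∪ ZltSet A x t ∪ ZgeSet A x t

/-- Weak Angluin's Condition with Existence: every L ∈ C has a finite tell-tale
T ⊆ L such that every L' ∈ C with T ⊆ L' and L' ⊊ L satisfies |L \ L'| < ∞. -/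
def WeakAngluinExistence {U : Type} (C : Set (Set U)) : Prop :=
  ∀ L ∈ C, ∃ T : Set U, T.Finite ∧ T ⊆ L ∧
    ∀ L' ∈ C, T ⊆ L' → L' ⊂ L → (L \ L').Finite

theorem exhaustive_generation_sufficient_condition
    (U : Type) [Countable U] [Infinite U]
    (L : ℕ → Set U) (hL : ∀ i, (L i).Infinite)
    (h : WeakAngluinExistence (Set.range L)) :
    ∃ A : List U → ℕ → U, ExhaustivelyGenerates A (Set.range L) := by
  classical
  choose T hTfin hTsub hTmin using fun i => h (L i) ⟨i, rfl⟩
  have henum : ∀ i, ∃ f : ℕ → U, L i = Set.range f := fun i =>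
    (Set.to_countable (L i)).exists_eq_range (hL i).nonempty
  choose e he using henum
  set P : List U → ℕ → Prop := fun l i => (T i ⊆ {a | a ∈ l}) ∧ ∀ a ∈ l, a ∈ L i with hP
  set idx : List U → ℕ := fun l => if hl : ∃ i, P l i then Nat.find hl else 0 with hidx
  refine ⟨fun l n => e (idx l) n, ?_⟩
  rintro K ⟨j, rfl⟩ x hx
  have hxK : ∀ s, x s ∈ L j := hx.1
  have hstar : ∃ i, T i ⊆ L j ∧ L j ⊆ L i := ⟨j, hTsub j, subset_rfl⟩
  set istar := Nat.find hstar with histar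
  obtain ⟨hT1, hT2⟩ := Nat.find_spec hstar
  have hgex : ∀ w : U, ∃ s, w ∈ T istar → x s = w := by
    intro w
    by_cases hw : w ∈ T istar
    · obtain ⟨s, hs⟩ := hx.2 w (hT1 hw); exact ⟨s, fun _ => hs⟩
    · exact ⟨0, fun hw' => absurd hw' hw⟩
  choose g hg using hgex
  obtain ⟨M, hM⟩ : BddAbove (g '' T istar) := ((hTfin istar).image g).bddAbove
  have hbad : ∀ i, ∃ N, i < istar → ∀ t, N ≤ t → ¬ P (inputList x t) i := by
    intro i
    by_cases hi : i < istar
    · have hni := Nat.find_min hstar hi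
      by_cases hTi : T i ⊆ L j
      · have hLi : ¬ L j ⊆ L i := fun hc => hni ⟨hTi, hc⟩
        obtain ⟨w, hwK, hwi⟩ := Set.not_subset.mp hLi
        obtain ⟨s, hs⟩ := hx.2 w hwK
        refine ⟨s + 1, fun _ t ht hPt => ?_⟩
        have hmem : x s ∈ inputList x t := by
          simp only [inputList, List.mem_ofFn]
          exact ⟨⟨s, lt_of_lt_of_le (Nat.lt_succ_self s) ht⟩, rfl⟩
        exact hwi (hs ▸ hPt.2 _ hmem)
      · obtain ⟨w, hw, hwj⟩ := Set.not_subset.mp hTi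
        refine ⟨0, fun _ t _ hPt => ?_⟩
        have hmem : w ∈ inputList x t := hPt.1 hw
        simp only [inputList, List.mem_ofFn] at hmem
        obtain ⟨⟨s, _⟩, hsw⟩ := hmem
        exact hwj (hsw ▸ hxK s)
    · exact ⟨0, fun hc => absurd hc hi⟩
  choose Nf hNf using hbad
  set tstar := max (M + 1) ((Finset.range istar).sup Nf) with htstar
  have hPstar : ∀ t, tstar ≤ t → P (inputList x t) istar := by
    intro t ht
    constructor
    · intro w hw
      have hgw : g w ≤ M := hM ⟨w, hw, rfl⟩
      have hgt : g w < t := lt_of_lt_of_le (Nat.lt_succ_of_le hgw)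
        (le_trans (le_max_left _ _) ht)
      show w ∈ inputList x t
      simp only [inputList, List.mem_ofFn]
      exact ⟨⟨g w, hgt⟩, hg w hw⟩
    · intro a ha
      simp only [inputList, List.mem_ofFn] at ha
      obtain ⟨⟨s, _⟩, hs⟩ := ha
      exact hT2 (hs ▸ hxK s)
  have hidxeq : ∀ t, tstar ≤ t → idx (inputList x t) = istar := by
    intro t ht
    have hex : ∃ i, P (inputList x t) i := ⟨istar, hPstar t ht⟩
    rw [hidx]
    simp only [dif_pos hex]
    rw [Nat.find_eq_iff]
    refine ⟨hPstar t ht, fun m hm => hNf m hm t (le_trans ?_ ht)⟩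
    exact le_trans (Finset.le_sup (Finset.mem_range.mpr hm)) (le_max_right _ _)
  refine ⟨tstar, fun t ht => ?_⟩
  have hZ : ZgeSet (fun l n => e (idx l) n) x t = L istar := by
    show Set.range (fun n => e (idx (inputList x t)) n) = L istar
    rw [hidxeq t ht, ← he]
  constructor
  · rw [hZ]
    by_cases hEq : L j = L istar
    · rw [← hEq]
      simp
    · exact hTmin istar (L j) ⟨j, rfl⟩ hT1
        (Set.ssubset_iff_subset_ne.mpr ⟨hT2, hEq⟩)
  · intro w hw
    exact Or.inr (show w ∈ ZgeSet (fun l n => e (idx l) n) x t by rw [hZ]; exact hT2 hw)
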